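/- Let K be a field and let t₁, t₂, t₃ ∈ K be nonzero with t₁t₂t₃ = 1. Define zᵢ := tᵢ − tᵢ⁻¹ for i = 1,2,3, and s₁ := z₁ − z₂, s₂ := z₁ − z₃. Then t₂ · (t₁²s₁ + t₁s₂ − t₁³ − t₁² + t₁ + 1) = t₁² − 1. -/
import Mathlib


/-- In the function field of the maximal torus of `G₂`: for nonzero `t₁, t₂, t₃` with
`t₁t₂t₃ = 1`, setting `zᵢ = tᵢ - tᵢ⁻¹`, `s₁ = z₁ - z₂`, `s₂ = z₁ - z₃`, one has
`t₂ (t₁²s₁ + t₁s₂ - t₁³ - t₁² + t₁ + 1) = t₁² - 1`. -/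
theorem g2_torus_t2_identity
    {K : Type*} [Field K] (t₁ t₂ t₃ : K)
    (h₁ : t₁ ≠ 0) (h₂ : t₂ ≠ 0) (h₃ : t₃ ≠ 0) (hprod : t₁ * t₂ * t₃ = 1) :
    (t₂ * (t₁ ^ 2 * ((t₁ - t₁⁻¹) - (t₂ - t₂⁻¹)) + t₁ * ((t₁ - t₁⁻¹) - (t₃ - t₃⁻¹))
        - t₁ ^ 3 - t₁ ^ 2 + t₁ + 1)) = t₁ ^ 2 - 1 := by
  have h3 : t₃ = (t₁ * t₂)⁻¹ := by
    field_simp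
    linear_combination hprod
  subst h3
  field_simp
  ring
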